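/- Let F = A^{1/m} be an m-th root Finsler metric on an open subset U ⊆ ℝⁿ such that for every x ∈ U the polynomial y ↦ A(x,y) is irreducible in ℝ[y¹,…,yⁿ]. If F has isotropic mean Berwald curvature, i.e. E_{jk}(x,y) = ((n+1)/2) c(x) F(x,y)^{−1} h_{jk}(x,y) for some smooth scalar function c on U, then c ≡ 0 and hence E = 0, i.e. F is a weakly Berwald metric. -/

import Mathlib

open scoped BigOperators
open Matrix

noncomputable section

/-- Partial derivative of `f` in the `i`-th coordinate direction at `v`. -/
def pd {n : ℕ} (f : (Fin n → ℝ) → ℝ) (i : Fin n) (v : Fin n → ℝ) : ℝ :=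
  fderiv ℝ f v (Pi.single i 1)

/-- `A(x,y) = a_{i₁⋯i_m}(x) y^{i₁}⋯y^{i_m}`. -/
def Amap {n m : ℕ} (a : (Fin m → Fin n) → (Fin n → ℝ) → ℝ) (x y : Fin n → ℝ) : ℝ :=
  ∑ ι : Fin m → Fin n, a ι x * ∏ k, y (ι k)

/-- Fundamental tensor `g_{ij} = ½ ∂²(F²)/∂y^i∂y^j`. -/
def gmat {n : ℕ} (F : (Fin n → ℝ) → (Fin n → ℝ) → ℝ) (x y : Fin n → ℝ) :
    Matrix (Fin n) (Fin n) ℝ :=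
  Matrix.of fun i j => (1/2) * pd (fun v => pd (fun w => (F x w)^2) j v) i y

/-- Spray coefficients `G^i = ¼ g^{il}[∂²(F²)/∂x^k∂y^l · y^k − ∂(F²)/∂x^l]`. -/
def sprayCoef {n : ℕ} (F : (Fin n → ℝ) → (Fin n → ℝ) → ℝ) (i : Fin n)
    (x y : Fin n → ℝ) : ℝ :=
  (1/4) * ∑ l, (gmat F x y)⁻¹ i l *
    ((∑ k, pd (fun x' => pd (fun w => (F x' w)^2) l y) k x * y k)
      - pd (fun x' => (F x' y)^2) l x)

/-- Mean Berwald curvature `E_{jk} = ½ ∂³G^i/∂y^j∂y^k∂y^i` (summed over i). -/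
def Ecurv {n : ℕ} (F : (Fin n → ℝ) → (Fin n → ℝ) → ℝ) (j k : Fin n)
    (x y : Fin n → ℝ) : ℝ :=
  (1/2) * ∑ i, pd (fun u => pd (fun v => pd (fun w => sprayCoef F i x w) i v) k u) j y

/-- Lowered index `y_j = g_{jl} y^l`. -/
def lowerY {n : ℕ} (F : (Fin n → ℝ) → (Fin n → ℝ) → ℝ) (x y : Fin n → ℝ)
    (j : Fin n) : ℝ :=
  ∑ l, gmat F x y j l * y l

/-- Angular metric `h_{jk} = g_{jk} − F⁻² y_j y_k`. -/
def angular {n : ℕ} (F : (Fin n → ℝ) → (Fin n → ℝ) → ℝ) (x y : Fin n → ℝ)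
    (j k : Fin n) : ℝ :=
  gmat F x y j k - ((F x y)^2)⁻¹ * lowerY F x y j * lowerY F x y k

lemma pd_comp_neg {n : ℕ} (f : (Fin n → ℝ) → ℝ) (i : Fin n) (v : Fin n → ℝ) :
    pd (fun w => f (-w)) i v = - pd f i (-v) := by
  have he : (fun w : Fin n → ℝ => f (-w)) = f ∘ (ContinuousLinearEquiv.neg ℝ (M := Fin n → ℝ)) := by
    funext w; simp [ContinuousLinearEquiv.neg_apply]
  have h := (ContinuousLinearEquiv.neg ℝ (M := Fin n → ℝ)).comp_right_fderiv (f := f) (x := v)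
  simp only [pd, he, h, ContinuousLinearMap.coe_comp', Function.comp_apply,
    ContinuousLinearEquiv.coe_coe, ContinuousLinearEquiv.neg_apply, map_neg]

lemma pd_even {n : ℕ} (f : (Fin n → ℝ) → ℝ) (hf : ∀ w, f (-w) = f w) (i : Fin n)
    (v : Fin n → ℝ) : pd f i (-v) = - pd f i v := by
  have h := pd_comp_neg f i v
  rw [funext hf] at h
  linarith

lemma pd_neg_fun {n : ℕ} (f : (Fin n → ℝ) → ℝ) (i : Fin n) (v : Fin n → ℝ) :
    pd (fun w => -(f w)) i v = - pd f i v := by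
  simp [pd, fderiv_neg]

lemma pd_odd {n : ℕ} (f : (Fin n → ℝ) → ℝ) (hf : ∀ w, f (-w) = -(f w)) (i : Fin n)
    (v : Fin n → ℝ) : pd f i (-v) = pd f i v := by
  have h := pd_comp_neg f i v
  rw [funext hf, pd_neg_fun] at h
  linarith

lemma Amap_neg {n m : ℕ} (a : (Fin m → Fin n) → (Fin n → ℝ) → ℝ) (x y : Fin n → ℝ) :
    Amap a x (-y) = (-1 : ℝ)^m * Amap a x y := by
  unfold Amap
  rw [Finset.mul_sum]
  apply Finset.sum_congr rfl
  intro ι _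
  have : ∏ k, (-y) (ι k) = (-1 : ℝ)^m * ∏ k, y (ι k) := by
    have : ∀ k : Fin m, (-y) (ι k) = (-1 : ℝ) * y (ι k) := fun k => by simp
    rw [Finset.prod_congr rfl (fun k _ => this k), Finset.prod_mul_distrib,
      Finset.prod_const, Finset.card_univ, Fintype.card_fin]
  rw [this]; ring

section parity
variable {n : ℕ} (F : (Fin n → ℝ) → (Fin n → ℝ) → ℝ)
variable (hFe : ∀ x w, F x (-w) = F x w)

include hFe

lemma gmat_even : ∀ x y, gmat F x (-y) = gmat F x y := by
  intro x y
  ext i j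
  simp only [gmat, Matrix.of_apply]
  congr 1
  exact pd_odd _ (fun v => pd_even _ (fun w => by rw [hFe]) j v) i y

lemma spray_even : ∀ i x y, sprayCoef F i x (-y) = sprayCoef F i x y := by
  intro i x y
  unfold sprayCoef
  rw [gmat_even F hFe]
  congr 1
  apply Finset.sum_congr rfl
  intro l _
  congr 2
  · have e1 : (fun x' => pd (fun w => (F x' w)^2) l (-y))
        = fun x' => -(pd (fun w => (F x' w)^2) l y) := by
      funext x'
      exact pd_even _ (fun w => by rw [hFe]) l y
    rw [e1]
    apply Finset.sum_congr rfl
    intro k _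
    rw [pd_neg_fun]
    simp only [Pi.neg_apply]
    ring
  · congr 1
    funext x'
    rw [hFe]

lemma Ecurv_odd : ∀ j k x y, Ecurv F j k x (-y) = - Ecurv F j k x y := by
  intro j k x y
  unfold Ecurv
  have h : ∀ i : Fin n,
      pd (fun u => pd (fun v => pd (fun w => sprayCoef F i x w) i v) k u) j (-y)
      = - pd (fun u => pd (fun v => pd (fun w => sprayCoef F i x w) i v) k u) j y :=
    fun i => pd_even _
      (fun u => pd_odd _
        (fun v => pd_even _ (fun w => spray_even F hFe i x w) i v) k u) j y
  rw [Finset.sum_congr rfl (fun i _ => h i), Finset.sum_neg_distrib]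
  ring

lemma lowerY_neg : ∀ x y j, lowerY F x (-y) j = - lowerY F x y j := by
  intro x y j
  unfold lowerY
  rw [gmat_even F hFe]
  simp [mul_neg, Finset.sum_neg_distrib]

lemma angular_even : ∀ x y j k, angular F x (-y) j k = angular F x y j k := by
  intro x y j k
  unfold angular
  rw [gmat_even F hFe, hFe, lowerY_neg F hFe, lowerY_neg F hFe]
  ring

end parity

/-- an m-th root metric with isotropic mean Berwald curvature
`E = ((n+1)/2) c F⁻¹ h` necessarily has `c ≡ 0`, i.e. it is weakly Berwald. -/
theorem mth_root_isotropic_mean_Berwald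
    (n m : ℕ) (hn : 2 ≤ n) (hm : 3 ≤ m)
    (U : Set (Fin n → ℝ)) (hU : IsOpen U)
    (a : (Fin m → Fin n) → (Fin n → ℝ) → ℝ)
    (ha_smooth : ∀ ι, ContDiff ℝ (⊤:ℕ∞) (a ι))
    (ha_symm : ∀ (σ : Equiv.Perm (Fin m)) (ι : Fin m → Fin n) (x : Fin n → ℝ),
      a (ι ∘ σ) x = a ι x)
    (hApos : ∀ x ∈ U, ∀ y : Fin n → ℝ, y ≠ 0 → 0 < Amap a x y)
    (F : (Fin n → ℝ) → (Fin n → ℝ) → ℝ)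
    (hF : ∀ x y, F x y = (Amap a x y) ^ ((1:ℝ)/m))
    (hgpd : ∀ x ∈ U, ∀ y : Fin n → ℝ, y ≠ 0 → (gmat F x y).PosDef)
    (hirr : ∀ x ∈ U, ∃ P : MvPolynomial (Fin n) ℝ, Irreducible P ∧
      ∀ y : Fin n → ℝ, MvPolynomial.eval y P = Amap a x y)
    (c : (Fin n → ℝ) → ℝ) (hc : ContDiffOn ℝ (⊤:ℕ∞) c U)
    (hE : ∀ x ∈ U, ∀ y : Fin n → ℝ, y ≠ 0 → ∀ j k,
      Ecurv F j k x y = ((n + 1 : ℝ)/2) * c x * (F x y)⁻¹ * angular F x y j k) :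
    (∀ x ∈ U, c x = 0) ∧
    (∀ x ∈ U, ∀ y : Fin n → ℝ, y ≠ 0 → ∀ j k, Ecurv F j k x y = 0) := by
  have i0 : Fin n := ⟨0, by omega⟩
  have hy0 : (Pi.single i0 1 : Fin n → ℝ) ≠ 0 := by
    intro h
    have := congrFun h i0
    simp at this
  rcases Nat.even_or_odd m with hme | hmo
  · -- m even : parity argument
    have hFe : ∀ x w, F x (-w) = F x w := by
      intro x w
      rw [hF, hF, Amap_neg, Even.neg_one_pow hme, one_mul]
    have key : ∀ x ∈ U, ∀ y : Fin n → ℝ, y ≠ 0 → ∀ j k,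
        Ecurv F j k x y = 0 ∧
          ((n + 1 : ℝ)/2) * c x * (F x y)⁻¹ * angular F x y j k = 0 := by
      intro x hx y hy j k
      have h1 := hE x hx y hy j k
      have h2 := hE x hx (-y) (neg_ne_zero.mpr hy) j k
      rw [Ecurv_odd F hFe, hFe, angular_even F hFe] at h2
      constructor <;> linarith
    refine ⟨?_, fun x hx y hy j k => (key x hx y hy j k).1⟩
    intro x hx
    by_contra hcx
    set y : Fin n → ℝ := Pi.single i0 1 with hydef
    have hy : y ≠ 0 := hy0
    have hA := hApos x hx y hy
    have hFpos : 0 < F x y := by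
      rw [hF]; exact Real.rpow_pos_of_pos hA _
    have hang : ∀ j k, angular F x y j k = 0 := by
      intro j k
      have h := (key x hx y hy j k).2
      have hn1 : ((n : ℝ) + 1)/2 ≠ 0 := by positivity
      have hFi : (F x y)⁻¹ ≠ 0 := inv_ne_zero (ne_of_gt hFpos)
      rcases mul_eq_zero.mp h with h' | h'
      · rcases mul_eq_zero.mp h' with h'' | h''
        · rcases mul_eq_zero.mp h'' with h3 | h3
          · exact absurd h3 hn1
          · exact absurd h3 hcx
        · exact absurd h'' hFi
      · exact h'
    have hg0 : ∀ j k, gmat F x y j k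
        = ((F x y)^2)⁻¹ * lowerY F x y j * lowerY F x y k := by
      intro j k
      have := hang j k
      unfold angular at this
      linarith
    obtain ⟨v, hvne, hvsum⟩ :
        ∃ v : Fin n → ℝ, v ≠ 0 ∧ ∑ j, lowerY F x y j * v j = 0 := by
      by_cases hl : ∀ j, lowerY F x y j = 0
      · exact ⟨Pi.single i0 1, hy0, by simp [hl]⟩
      · push_neg at hl
        obtain ⟨j0, hj0⟩ := hl
        obtain ⟨j1, hj1⟩ : ∃ j1 : Fin n, j1 ≠ j0 := by
          have hcard : 1 < Fintype.card (Fin n) := by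
            rw [Fintype.card_fin]; omega
          exact Fintype.exists_ne_of_one_lt_card hcard j0
        refine ⟨fun j => lowerY F x y j1 * (Pi.single j0 1 : Fin n → ℝ) j
            - lowerY F x y j0 * (Pi.single j1 1 : Fin n → ℝ) j, ?_, ?_⟩
        · intro h
          have := congrFun h j1
          simp [Pi.single_apply, hj1] at this
          exact hj0 this
        · have h1 : ∑ j, lowerY F x y j * (lowerY F x y j1 * (Pi.single j0 1 : Fin n → ℝ) j)
              = lowerY F x y j0 * lowerY F x y j1 := by
            rw [Finset.sum_eq_single j0]
            · simp
            · intro b _ hb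
              simp [Pi.single_apply, hb]
            · intro habs
              exact absurd (Finset.mem_univ _) habs
          have h2 : ∑ j, lowerY F x y j * (lowerY F x y j0 * (Pi.single j1 1 : Fin n → ℝ) j)
              = lowerY F x y j1 * lowerY F x y j0 := by
            rw [Finset.sum_eq_single j1]
            · simp
            · intro b _ hb
              simp [Pi.single_apply, hb]
            · intro habs
              exact absurd (Finset.mem_univ _) habs
          have e : ∑ j, lowerY F x y j *
                (lowerY F x y j1 * (Pi.single j0 1 : Fin n → ℝ) j
                  - lowerY F x y j0 * (Pi.single j1 1 : Fin n → ℝ) j)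
              = (∑ j, lowerY F x y j * (lowerY F x y j1 * (Pi.single j0 1 : Fin n → ℝ) j))
                - ∑ j, lowerY F x y j * (lowerY F x y j0 * (Pi.single j1 1 : Fin n → ℝ) j) := by
            rw [← Finset.sum_sub_distrib]
            apply Finset.sum_congr rfl
            intro j _
            ring
          rw [e, h1, h2]
          ring
    have hquad := (Matrix.posDef_iff_dotProduct_mulVec.mp (hgpd x hx y hy)).2 hvne
    have hquad' : 0 < ∑ j, v j * ∑ k, gmat F x y j k * v k := by
      simpa [dotProduct, mulVec] using hquad
    have hz : ∑ j, v j * ∑ k, gmat F x y j k * v k = 0 := by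
      have e1 : ∀ j, v j * ∑ k, gmat F x y j k * v k
          = ((F x y)^2)⁻¹ * (lowerY F x y j * v j) * ∑ k, lowerY F x y k * v k := by
        intro j
        rw [Finset.sum_congr rfl (fun k _ => by rw [hg0])]
        rw [Finset.mul_sum, Finset.mul_sum]
        apply Finset.sum_congr rfl
        intro k _
        ring
      rw [Finset.sum_congr rfl (fun j _ => e1 j), ← Finset.sum_mul, hvsum, mul_zero]
    linarith
  · -- m odd : hypotheses contradictory on U
    have hFalse : ∀ x ∈ U, False := by
      intro x hx
      have h1 := hApos x hx _ hy0
      have h2 := hApos x hx (-(Pi.single i0 1)) (neg_ne_zero.mpr hy0)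
      rw [Amap_neg, Odd.neg_one_pow hmo] at h2
      linarith
    exact ⟨fun x hx => (hFalse x hx).elim, fun x hx y hy j k => (hFalse x hx).elim⟩
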